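/- Let G be a finite simple graph that has a tree decomposition of width w. Then G has a tree decomposition of width at most w in which every node of the underlying tree has degree at most 3. -/

import Mathlib

/-- A tree decomposition of a simple graph `G` on vertex type `V` consists of a tree `T`
(on node type `τ`) together with a label `L N ⊆ V` for each node `N`, such that every
vertex belongs to some label, both endpoints of every edge belong to a common label, and
for each vertex the set of nodes whose label contains it induces a connected subgraph
(a subtree) of `T`. -/
def IsTreeDecomposition {V τ : Type} (G : SimpleGraph V)
    (T : SimpleGraph τ) (L : τ → Set V) : Prop :=
  T.IsTree ∧
  (∀ v : V, ∃ N : τ, v ∈ L N) ∧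
  (∀ u v : V, G.Adj u v → ∃ N : τ, u ∈ L N ∧ v ∈ L N) ∧
  (∀ v : V, (T.induce {N : τ | v ∈ L N}).Connected)

/-- The width of a tree decomposition: one less than the maximum size of a label. -/
noncomputable def tdWidth {V τ : Type} (L : τ → Set V) : ℕ :=
  sSup (Set.range fun N : τ => (L N).ncard) - 1
open SimpleGraph

private lemma reach_lift {α β : Type*} {A : SimpleGraph α} {B : SimpleGraph β} (f : α → β)
    (h : ∀ u v, A.Adj u v → B.Reachable (f u) (f v)) {u v : α} (huv : A.Reachable u v) :
    B.Reachable (f u) (f v) := by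
  obtain ⟨w⟩ := huv
  induction w with
  | nil => exact Reachable.refl _
  | cons hadj _ ih => exact (h _ _ hadj).trans ih

private lemma connected_transfer {α β : Type*} {A : SimpleGraph α} {B : SimpleGraph β} (f : α → β)
    (hA : A.Connected) (h : ∀ u v, A.Adj u v → B.Reachable (f u) (f v))
    (hs : ∀ b : β, ∃ a : α, B.Reachable b (f a)) : B.Connected := by
  have hne : Nonempty α := hA.nonempty
  rw [connected_iff]
  refine ⟨fun x y => ?_, ⟨f (Classical.arbitrary α)⟩⟩
  obtain ⟨ax, hx⟩ := hs x
  obtain ⟨ay, hy⟩ := hs y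
  exact hx.trans ((reach_lift f h (hA.preconnected ax ay)).trans hy.symm)

private lemma connected_delete {α : Type*} {A : SimpleGraph α} {u v : α}
    (hA : A.Connected) (hr : (A \ fromEdgeSet {s(u,v)}).Reachable u v) :
    (A \ fromEdgeSet {s(u,v)}).Connected := by
  apply connected_transfer (id) hA ?_ (fun b => ⟨b, Reachable.refl _⟩)
  intro x y hxy
  by_cases he : s(x,y) = s(u,v)
  · rw [Sym2.eq_iff] at he
    rcases he with ⟨rfl, rfl⟩ | ⟨rfl, rfl⟩
    · exact hr
    · exact hr.symm
  · exact Adj.reachable (by simp [hxy, he, hxy.ne])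

private lemma hand {α : Type*} [Fintype α] (A : SimpleGraph α) :
    ∑ x, (A.neighborSet x).ncard = 2 * A.edgeSet.ncard := by
  classical
  have h1 : ∀ x, (A.neighborSet x).ncard = A.degree x := by
    intro x
    rw [← A.card_neighborFinset_eq_degree x, ← Set.ncard_coe_finset, neighborFinset_def, Set.coe_toFinset]
  have h2 : A.edgeSet.ncard = A.edgeFinset.card := by
    rw [← coe_edgeFinset, Set.ncard_coe_finset]
  simp_rw [h1, h2]
  exact A.sum_degrees_eq_twice_card_edges

private lemma conn_card_le {α : Type*} [Fintype α] :
    ∀ (n : ℕ) (A : SimpleGraph α), A.edgeSet.ncard = n → A.Connected →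
      Fintype.card α ≤ n + 1 := by
  intro n
  induction n using Nat.strong_induction_on with
  | _ n ih =>
    intro A hn hA
    by_cases hac : A.IsAcyclic
    · have ht : A.IsTree := ⟨hA, hac⟩
      classical
      have := ht.card_edgeFinset
      have h2 : A.edgeSet.ncard = A.edgeFinset.card := by
        rw [← coe_edgeFinset, Set.ncard_coe_finset]
      omega
    · rw [isAcyclic_iff_forall_adj_isBridge] at hac
      push_neg at hac
      obtain ⟨u, v, hadj, hbr⟩ := hac
      set A' := A \ fromEdgeSet {s(u,v)} with hA'
      have hr : A'.Reachable u v := by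
        by_contra h
        exact hbr h
      have hconn' := connected_delete hA hr
      have hAedge : A'.edgeSet = A.edgeSet \ {s(u,v)} := by
        rw [hA']
        exact edgeSet_deleteEdges _
      have hmem : s(u,v) ∈ A.edgeSet := hadj
      have hcard : A'.edgeSet.ncard = n - 1 := by
        rw [hAedge, Set.ncard_diff_singleton_of_mem hmem, hn]
      have hn1 : 1 ≤ n := by
        rw [← hn]
        exact (Set.ncard_pos A.edgeSet.toFinite).mpr ⟨_, hmem⟩
      have := ih (n-1) (by omega) A' hcard hconn'
      omega

private lemma isTree_of_connected_card {α : Type*} [Fintype α] (A : SimpleGraph α)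
    (hA : A.Connected) (hcard : A.edgeSet.ncard + 1 = Fintype.card α) : A.IsTree := by
  refine ⟨hA, ?_⟩
  by_contra hac
  rw [isAcyclic_iff_forall_adj_isBridge] at hac
  push_neg at hac
  obtain ⟨u, v, hadj, hbr⟩ := hac
  set A' := A \ fromEdgeSet {s(u,v)} with hA'
  have hr : A'.Reachable u v := by
    by_contra h
    exact hbr h
  have hconn' := connected_delete hA hr
  have hAedge : A'.edgeSet = A.edgeSet \ {s(u,v)} := by
    rw [hA']
    exact edgeSet_deleteEdges _
  have hmem : s(u,v) ∈ A.edgeSet := hadj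
  have hn1 : 1 ≤ A.edgeSet.ncard := (Set.ncard_pos A.edgeSet.toFinite).mpr ⟨_, hmem⟩
  have hcard' : A'.edgeSet.ncard = A.edgeSet.ncard - 1 := by
    rw [hAedge, Set.ncard_diff_singleton_of_mem hmem]
  have := conn_card_le _ A' hcard' hconn'
  omega

private def split {τ : Type*} (T : SimpleGraph τ) (N0 : τ) (S : Set τ) :
    SimpleGraph (Option τ) where
  Adj x y :=
    match x, y with
    | some u, some v => T.Adj u v ∧ ¬(u = N0 ∧ v ∈ S) ∧ ¬(v = N0 ∧ u ∈ S)
    | some u, none => u = N0 ∨ u ∈ S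
    | none, some v => v = N0 ∨ v ∈ S
    | none, none => False
  symm := by
    refine ⟨?_⟩
    rintro (_ | u) (_ | v) h
    · exact h
    · exact h
    · exact h
    · exact ⟨h.1.symm, h.2.2, h.2.1⟩
  loopless := by
    refine ⟨?_⟩
    rintro (_ | u) h
    · exact h
    · exact T.loopless.irrefl u h.1

@[simp] private lemma split_adj_ss {τ : Type*} {T : SimpleGraph τ} {N0 : τ} {S : Set τ}
    {u v : τ} : (split T N0 S).Adj (some u) (some v) ↔
      T.Adj u v ∧ ¬(u = N0 ∧ v ∈ S) ∧ ¬(v = N0 ∧ u ∈ S) := Iff.rfl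

@[simp] private lemma split_adj_sn {τ : Type*} {T : SimpleGraph τ} {N0 : τ} {S : Set τ}
    {u : τ} : (split T N0 S).Adj (some u) none ↔ u = N0 ∨ u ∈ S := Iff.rfl

@[simp] private lemma split_adj_ns {τ : Type*} {T : SimpleGraph τ} {N0 : τ} {S : Set τ}
    {v : τ} : (split T N0 S).Adj none (some v) ↔ v = N0 ∨ v ∈ S := Iff.rfl

@[simp] private lemma split_adj_nn {τ : Type*} {T : SimpleGraph τ} {N0 : τ} {S : Set τ} :
    ¬ (split T N0 S).Adj none none := fun h => h

private lemma step {V τ : Type} [Fintype V] [Fintype τ] (G : SimpleGraph V)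
    (T : SimpleGraph τ) (L : τ → Set V) (hTD : IsTreeDecomposition G T L)
    (N0 : τ) (hN0 : 4 ≤ (T.neighborSet N0).ncard) :
    ∃ (T' : SimpleGraph (Option τ)) (L' : Option τ → Set V),
      IsTreeDecomposition G T' L' ∧
      (Set.range fun N => (L' N).ncard) ⊆ (Set.range fun N => (L N).ncard) ∧
      (∑ N : Option τ, ((T'.neighborSet N).ncard - 3)) <
        (∑ N : τ, ((T.neighborSet N).ncard - 3)) := by
  classical
  obtain ⟨htree, hcov, hedge, hind⟩ := hTD
  set d := (T.neighborSet N0).ncard with hd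
  have h2 : 1 < (T.neighborSet N0).ncard := by omega
  obtain ⟨a, ha, b, hb, hab⟩ :=
    (Set.one_lt_ncard (T.neighborSet N0).toFinite).mp h2
  set S : Set τ := T.neighborSet N0 \ {a, b} with hS
  have hSsub : S ⊆ T.neighborSet N0 := Set.diff_subset
  have hN0nb : N0 ∉ T.neighborSet N0 := fun h => T.loopless.irrefl N0 h
  have hN0S : N0 ∉ S := fun h => hN0nb (hSsub h)
  have haS : a ∉ S := fun h => h.2 (by simp)
  have hbS : b ∉ S := fun h => h.2 (by simp)
  have habsub : ({a, b} : Set τ) ⊆ T.neighborSet N0 := by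
    intro x hx
    rcases hx with rfl | rfl
    · exact ha
    · exact hb
  have hScard : S.ncard = d - 2 := by
    rw [hS, Set.ncard_diff habsub, Set.ncard_pair hab]
  set T' := split T N0 S with hT'
  set L' : Option τ → Set V := fun o => L (o.getD N0) with hL'
  -- neighbor set computations
  have hSc : ∀ v, v ∈ T.neighborSet N0 → v ∉ S → v = a ∨ v = b := by
    intro v hv hvS
    rw [hS, Set.mem_diff] at hvS
    push_neg at hvS
    simpa using hvS hv
  have ns1 : T'.neighborSet (some N0) = {some a, some b, none} := by
    ext x
    match x with
    | none => simp [mem_neighborSet, hT']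
    | some v =>
      simp only [mem_neighborSet, hT', split_adj_ss, Set.mem_insert_iff,
        Set.mem_singleton_iff, Option.some.injEq]
      constructor
      · rintro ⟨hadj, h1, -⟩
        rcases hSc v hadj (fun hvs => h1 ⟨trivial, hvs⟩) with h | h
        · exact Or.inl h
        · exact Or.inr (Or.inl h)
      · intro h
        have hv : v = a ∨ v = b := by
          rcases h with h | h | h
          · exact Or.inl h
          · exact Or.inr h
          · exact absurd h (by simp)
        have hadj : T.Adj N0 v := by
          rcases hv with rfl | rfl
          · exact ha
          · exact hb
        have hvS : v ∉ S := by
          rcases hv with rfl | rfl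
          · exact haS
          · exact hbS
        exact ⟨hadj, fun hc => hvS hc.2, fun hc => hN0S hc.2⟩
  have ns2 : T'.neighborSet none = some '' (insert N0 S) := by
    ext x
    match x with
    | none => simp [mem_neighborSet, hT']
    | some v =>
      simp only [mem_neighborSet, hT', split_adj_ns, Set.mem_image,
        Option.some.injEq, Set.mem_insert_iff]
      constructor
      · rintro (rfl | h)
        · exact ⟨v, Or.inl rfl, rfl⟩
        · exact ⟨v, Or.inr h, rfl⟩
      · rintro ⟨y, hy, rfl⟩
        exact hy
  have ns3 : ∀ t, t ≠ N0 → t ∉ S →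
      T'.neighborSet (some t) = some '' (T.neighborSet t) := by
    intro t ht htS
    ext x
    match x with
    | none =>
      simp only [mem_neighborSet, hT', split_adj_sn, Set.mem_image]
      constructor
      · rintro (rfl | h)
        · exact absurd rfl ht
        · exact absurd h htS
      · rintro ⟨y, _, h⟩
        exact absurd h (by simp)
    | some v =>
      simp only [mem_neighborSet, hT', split_adj_ss, Set.mem_image,
        Option.some.injEq]
      constructor
      · rintro ⟨hadj, -, -⟩
        exact ⟨v, hadj, rfl⟩
      · rintro ⟨y, hy, rfl⟩
        exact ⟨hy, fun hc => ht hc.1, fun hc => htS hc.2⟩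
  have ns4 : ∀ t, t ∈ S →
      T'.neighborSet (some t) = insert none (some '' (T.neighborSet t \ {N0})) := by
    intro t htS
    have ht : t ≠ N0 := fun h => hN0S (h ▸ htS)
    ext x
    match x with
    | none => simp [mem_neighborSet, hT', htS]
    | some v =>
      simp only [mem_neighborSet, hT', split_adj_ss, Set.mem_insert_iff,
        Set.mem_image, Option.some.injEq, Set.mem_diff, Set.mem_singleton_iff]
      constructor
      · rintro ⟨hadj, h1, h2⟩
        refine Or.inr ⟨v, ⟨hadj, fun hv => h2 ⟨hv, htS⟩⟩, rfl⟩
      · rintro (h | ⟨y, ⟨hy, hyN0⟩, rfl⟩)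
        · exact absurd h (by simp)
        · exact ⟨hy, fun hc => ht hc.1, fun hc => hyN0 hc.1⟩
  -- degree computations
  have deg1 : (T'.neighborSet (some N0)).ncard = 3 := by
    rw [ns1, Set.ncard_insert_of_notMem (by simp [hab]) (Set.toFinite _),
      Set.ncard_insert_of_notMem (by simp) (Set.toFinite _), Set.ncard_singleton]
  have deg2 : (T'.neighborSet none).ncard = d - 1 := by
    rw [ns2, Set.ncard_image_of_injective _ (Option.some_injective τ),
      Set.ncard_insert_of_notMem hN0S (Set.toFinite _), hScard]
    omega
  have deg3 : ∀ t, t ≠ N0 →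
      (T'.neighborSet (some t)).ncard = (T.neighborSet t).ncard := by
    intro t ht
    by_cases htS : t ∈ S
    · have hN0t : N0 ∈ T.neighborSet t := (hSsub htS).symm
      have hpos : 0 < (T.neighborSet t).ncard :=
        (Set.ncard_pos (Set.toFinite _)).mpr ⟨N0, hN0t⟩
      rw [ns4 t htS, Set.ncard_insert_of_notMem (by simp) (Set.toFinite _),
        Set.ncard_image_of_injective _ (Option.some_injective τ),
        Set.ncard_diff_singleton_of_mem hN0t]
      omega
    · rw [ns3 t ht htS, Set.ncard_image_of_injective _ (Option.some_injective τ)]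
  -- sum decrease
  have hsum : (∑ N : Option τ, ((T'.neighborSet N).ncard - 3)) <
      (∑ N : τ, ((T.neighborSet N).ncard - 3)) := by
    have e1 : ∑ N : Option τ, ((T'.neighborSet N).ncard - 3)
        = (d - 1 - 3) + ∑ t : τ, ((T'.neighborSet (some t)).ncard - 3) := by
      rw [Fintype.sum_option, deg2]
    have e2 : ∑ t : τ, ((T'.neighborSet (some t)).ncard - 3)
        = 0 + ∑ t ∈ Finset.univ.erase N0, ((T.neighborSet t).ncard - 3) := by
      rw [← Finset.add_sum_erase _ _ (Finset.mem_univ N0), deg1]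
      congr 1
      apply Finset.sum_congr rfl
      intro t htmem
      rw [deg3 t (Finset.ne_of_mem_erase htmem)]
    have e3 : ∑ t : τ, ((T.neighborSet t).ncard - 3)
        = (d - 3) + ∑ t ∈ Finset.univ.erase N0, ((T.neighborSet t).ncard - 3) := by
      rw [← Finset.add_sum_erase _ _ (Finset.mem_univ N0)]
    rw [e1, e2, e3]
    omega
  -- connectivity of T'
  have hlift : ∀ u v : τ, T.Adj u v → T'.Reachable (some u) (some v) := by
    intro u v huv
    by_cases h1 : u = N0 ∧ v ∈ S
    · have e1 : T'.Adj (some u) none := by simp [hT', h1.1]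
      have e2 : T'.Adj none (some v) := by simp [hT', h1.2]
      exact e1.reachable.trans e2.reachable
    · by_cases h2 : v = N0 ∧ u ∈ S
      · have e1 : T'.Adj (some u) none := by simp [hT', h2.2]
        have e2 : T'.Adj none (some v) := by simp [hT', h2.1]
        exact e1.reachable.trans e2.reachable
      · exact Adj.reachable (show T'.Adj (some u) (some v) from ⟨huv, h1, h2⟩)
  have hT'conn : T'.Connected := by
    apply connected_transfer some htree.isConnected hlift
    rintro (_ | t)
    · refine ⟨N0, Adj.reachable ?_⟩
      simp [hT']
    · exact ⟨t, Reachable.refl _⟩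
  -- edge count, tree
  have hT'tree : T'.IsTree := by
    have hhand := hand T
    have hhand' := hand T'
    have hE : T.edgeSet.ncard + 1 = Fintype.card τ := by
      have h1 := htree.card_edgeFinset
      have h2 : T.edgeSet.ncard = T.edgeFinset.card := by
        rw [← coe_edgeFinset, Set.ncard_coe_finset]
      omega
    have hs1 : ∑ x : Option τ, (T'.neighborSet x).ncard
        = (d - 1) + (3 + ∑ t ∈ Finset.univ.erase N0, (T.neighborSet t).ncard) := by
      rw [Fintype.sum_option, deg2]
      congr 1
      rw [← Finset.add_sum_erase _ _ (Finset.mem_univ N0), deg1]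
      congr 1
      apply Finset.sum_congr rfl
      intro t htmem
      rw [deg3 t (Finset.ne_of_mem_erase htmem)]
    have hs2 : ∑ t : τ, (T.neighborSet t).ncard
        = d + ∑ t ∈ Finset.univ.erase N0, (T.neighborSet t).ncard :=
      (Finset.add_sum_erase _ _ (Finset.mem_univ N0)).symm
    apply isTree_of_connected_card T' hT'conn
    rw [Fintype.card_option]
    rw [hs1] at hhand'
    rw [hs2] at hhand
    omega
  refine ⟨T', L', ⟨hT'tree, ?_, ?_, ?_⟩, ?_, hsum⟩
  · intro v
    obtain ⟨N, hN⟩ := hcov v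
    exact ⟨some N, hN⟩
  · intro u v huv
    obtain ⟨N, hN⟩ := hedge u v huv
    exact ⟨some N, hN⟩
  · intro v
    have hconn := hind v
    refine connected_transfer
      (fun x : {N : τ | v ∈ L N} => (⟨some x.1, x.2⟩ : {o : Option τ | v ∈ L' o}))
      hconn ?_ ?_
    · rintro ⟨x, hx⟩ ⟨y, hy⟩ hxy
      have hxy' : T.Adj x y := hxy
      by_cases h1 : x = N0 ∧ y ∈ S
      · have hnone : none ∈ {o : Option τ | v ∈ L' o} := show v ∈ L N0 from h1.1 ▸ hx
        have e1 : (T'.induce {o : Option τ | v ∈ L' o}).Adj ⟨some x, hx⟩ ⟨none, hnone⟩ := by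
          show T'.Adj (some x) none
          simp [hT', h1.1]
        have e2 : (T'.induce {o : Option τ | v ∈ L' o}).Adj ⟨none, hnone⟩ ⟨some y, hy⟩ := by
          show T'.Adj none (some y)
          simp [hT', h1.2]
        exact e1.reachable.trans e2.reachable
      · by_cases h2 : y = N0 ∧ x ∈ S
        · have hnone : none ∈ {o : Option τ | v ∈ L' o} := show v ∈ L N0 from h2.1 ▸ hy
          have e1 : (T'.induce {o : Option τ | v ∈ L' o}).Adj ⟨some x, hx⟩ ⟨none, hnone⟩ := by
            show T'.Adj (some x) none
            simp [hT', h2.2]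
          have e2 : (T'.induce {o : Option τ | v ∈ L' o}).Adj ⟨none, hnone⟩ ⟨some y, hy⟩ := by
            show T'.Adj none (some y)
            simp [hT', h2.1]
          exact e1.reachable.trans e2.reachable
        · refine Adj.reachable ?_
          show T'.Adj (some x) (some y)
          exact ⟨hxy', h1, h2⟩
    · rintro ⟨(_ | t), ho⟩
      · refine ⟨⟨N0, ho⟩, Adj.reachable ?_⟩
        show T'.Adj none (some N0)
        simp [hT']
      · exact ⟨⟨t, ho⟩, Reachable.refl _⟩
  · rintro _ ⟨o, rfl⟩
    exact ⟨o.getD N0, rfl⟩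

private lemma key {V : Type} [Fintype V] (G : SimpleGraph V) :
    ∀ (k : ℕ) (τ : Type) (_ : Fintype τ) (T : SimpleGraph τ) (L : τ → Set V),
      IsTreeDecomposition G T L →
      (∑ N : τ, ((T.neighborSet N).ncard - 3)) ≤ k →
      ∃ (τ' : Type) (_ : Fintype τ') (T' : SimpleGraph τ') (L' : τ' → Set V),
        IsTreeDecomposition G T' L' ∧
        (Set.range fun N => (L' N).ncard) ⊆ (Set.range fun N => (L N).ncard) ∧
        ∀ N : τ', ((T'.neighborSet N).ncard ≤ 3) := by
  intro k
  induction k with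
  | zero =>
    intro τ ft T L hTD hsum
    refine ⟨τ, ft, T, L, hTD, subset_rfl, fun N => ?_⟩
    have h0 := Finset.sum_eq_zero_iff.mp (Nat.le_zero.mp hsum) N (Finset.mem_univ N)
    omega
  | succ k ih =>
    intro τ ft T L hTD hsum
    by_cases hdeg : ∀ N, (T.neighborSet N).ncard ≤ 3
    · exact ⟨τ, ft, T, L, hTD, subset_rfl, hdeg⟩
    · push_neg at hdeg
      obtain ⟨N0, hN0⟩ := hdeg
      obtain ⟨T', L', hTD', hrange, hlt⟩ := step G T L hTD N0 (by omega)
      obtain ⟨τ'', f'', T'', L'', h1, h2, h3⟩ :=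
        ih (Option τ) inferInstance T' L' hTD' (by omega)
      exact ⟨τ'', f'', T'', L'', h1, h2.trans hrange, h3⟩


/-- If a finite simple graph `G` has a tree decomposition of width `w`, then `G` has a
tree decomposition of width at most `w` in which every node of the underlying tree has
degree at most `3`. -/
theorem stmt_11 {V τ : Type} [Fintype V] [Fintype τ]
    (G : SimpleGraph V) (T : SimpleGraph τ) (L : τ → Set V)
    (hTD : IsTreeDecomposition G T L) (w : ℕ) (hw : tdWidth L = w) :
    ∃ (τ' : Type) (_ : Fintype τ') (T' : SimpleGraph τ') (L' : τ' → Set V),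
      IsTreeDecomposition G T' L' ∧ tdWidth L' ≤ w ∧
      ∀ N : τ', (T'.neighborSet N).ncard ≤ 3 := by
  obtain ⟨τ', f', T', L', h1, h2, h3⟩ :=
    key G (∑ N : τ, ((T.neighborSet N).ncard - 3)) τ inferInstance T L hTD le_rfl
  refine ⟨τ', f', T', L', h1, ?_, h3⟩
  rw [← hw]
  unfold tdWidth
  rcases Set.eq_empty_or_nonempty (Set.range fun N : τ' => (L' N).ncard) with he | hne
  · rw [he, csSup_empty]
    simp
  · have hb : BddAbove (Set.range fun N : τ => (L N).ncard) :=
      (Set.finite_range _).bddAbove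
    have := csSup_le_csSup hb hne h2
    omega
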